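/- Suppose there exist a commutative unital complex Banach algebra A, a sequence (φ_n)_{n∈ℕ} of pairwise distinct characters on A, and a sequence (λ_n)_{n∈ℕ} of complex numbers with ∑_{n=1}^∞ |λ_n| < ∞, not all λ_n zero, such that ∑_{n=1}^∞ λ_n φ_n(a) = 0 for every a ∈ A. Then there exists a bounded sequence (α_n)_{n∈ℕ} of pairwise distinct complex numbers such that ∑_{n=1}^∞ λ_n α_n^k = 0 for every integer k ≥ 0. -/

import Mathlib

open WeakDual

/-- If some nonzero absolutely summable linear combination of pairwise distinct characters on
a commutative unital complex Banach algebra vanishes, then there is a bounded sequence of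
pairwise distinct complex numbers `α n` with `∑' n, l n * α n ^ k = 0` for all `k ≥ 0`
(with the same coefficients `l n`). -/
theorem exists_bounded_distinct_seq_with_vanishing_moments
    {A : Type*} [NormedCommRing A] [NormedAlgebra ℂ A] [CompleteSpace A]
    (φ : ℕ → characterSpace ℂ A) (hφ : Function.Injective φ)
    (l : ℕ → ℂ) (hl : Summable fun n => ‖l n‖) (hne : ∃ n, l n ≠ 0)
    (hzero : ∀ a : A, ∑' n, l n * φ n a = 0) :
    ∃ α : ℕ → ℂ, Function.Injective α ∧ Bornology.IsBounded (Set.range α) ∧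
      ∀ k : ℕ, ∑' n, l n * α n ^ k = 0 := by
  -- find `a ∈ A` separating all the characters simultaneously, by the Baire category theorem
  have hdense : Dense (⋂ p : {p : ℕ × ℕ // p.1 ≠ p.2},
      {a : A | (φ p.1.1) a ≠ (φ p.1.2) a}) := by
    apply dense_iInter_of_isOpen
    · intro p
      have hc : Continuous fun a : A => (φ p.1.1) a - (φ p.1.2) a :=
        ((CharacterSpace.toCLM (φ p.1.1)).continuous).sub
          ((CharacterSpace.toCLM (φ p.1.2)).continuous)
      have : {a : A | (φ p.1.1) a ≠ (φ p.1.2) a}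
          = (fun a : A => (φ p.1.1) a - (φ p.1.2) a) ⁻¹' {0}ᶜ := by
        ext a; simp [sub_eq_zero]
      rw [this]
      exact (isOpen_compl_singleton).preimage hc
    · intro p
      -- the complement of the kernel of a nonzero continuous linear functional is dense
      set g : A →L[ℂ] ℂ := CharacterSpace.toCLM (φ p.1.1) - CharacterSpace.toCLM (φ p.1.2)
        with hg
      have hgne : g ≠ 0 := by
        intro h
        apply p.2
        apply hφ
        ext a
        have := ContinuousLinearMap.ext_iff.mp h a
        simpa [hg, sub_eq_zero, CharacterSpace.coe_toCLM] using this
      have hS : {a : A | (φ p.1.1) a ≠ (φ p.1.2) a}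
          = (LinearMap.ker (g : A →ₗ[ℂ] ℂ) : Set A)ᶜ := by
        ext a
        simp [hg, sub_eq_zero, LinearMap.mem_ker]
      rw [hS]
      rw [← interior_eq_empty_iff_dense_compl]
      by_contra h
      have : LinearMap.ker (g : A →ₗ[ℂ] ℂ) = ⊤ :=
        Submodule.eq_top_of_nonempty_interior' _ (Set.nonempty_iff_ne_empty.mpr h)
      apply hgne
      ext a
      have : a ∈ LinearMap.ker (g : A →ₗ[ℂ] ℂ) := this ▸ Submodule.mem_top
      simpa using this
  obtain ⟨a, ha⟩ := hdense.nonempty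
  rw [Set.mem_iInter] at ha
  refine ⟨fun n => φ n a, ?_, ?_, ?_⟩
  · intro n m h
    by_contra hnm
    exact ha ⟨(n, m), hnm⟩ h
  · refine (spectrum.isBounded a).subset ?_
    rintro - ⟨n, rfl⟩
    exact CharacterSpace.apply_mem_spectrum (φ n) a
  · intro k
    have : ∀ n, l n * (φ n) a ^ k = l n * (φ n) (a ^ k) := by
      intro n; rw [map_pow]
    simp_rw [this]
    exact hzero (a ^ k)
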